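/- Let κ be a regular cardinal and let λ be a regular cardinal with λ ≥ κ⁺⁺. Let S ⊆ S^λ_κ be a stationary subset of λ. Then there exists a club guessing sequence (C_α : α ∈ S): that is, each C_α is a club of α of order type κ, and for every club E of λ there exists α ∈ S with C_α ⊆ E. -/

import Mathlib

open Cardinal Set

/-- `C` is a club (closed and unbounded set) in the limit ordinal `δ`:
`C ⊆ δ`, the supremum of every nonempty subset of `C` bounded below `δ`
belongs to `C`, and `C` is unbounded in `δ`. -/
def IsClubIn (C : Set Ordinal) (δ : Ordinal) : Prop :=
  (∀ x ∈ C, x < δ) ∧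
  (∀ s : Set Ordinal, s ⊆ C → s.Nonempty → sSup s < δ → sSup s ∈ C) ∧
  (∀ β < δ, ∃ x ∈ C, β < x)

/-- `S` is a stationary subset of `lam`: `S ⊆ lam` and `S` meets every club of `lam`. -/
def IsStatIn (S : Set Ordinal) (lam : Ordinal) : Prop :=
  (∀ x ∈ S, x < lam) ∧ ∀ C : Set Ordinal, IsClubIn C lam → (S ∩ C).Nonempty

namespace ClubGuess
universe u
open scoped Classical

theorem bdd_of_lt {s : Set Ordinal.{u}} {γ : Ordinal} (h : ∀ x ∈ s, x ≤ γ) : BddAbove s :=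
  ⟨γ, fun x hx => h x hx⟩

noncomputable def enum (g : Ordinal.{u} → Ordinal.{u}) (B : Set Ordinal.{u}) : Ordinal.{u} → Ordinal.{u}
  | i =>
    if Order.IsSuccLimit i then sSup (Set.range fun j : Set.Iio i => enum g B j.1)
    else sInf {x | x ∈ B ∧ g i < x ∧ ∀ j < i, enum g B j < x}
termination_by i => i
decreasing_by exacts [j.2, ‹_›]

theorem enum_def (g : Ordinal.{u} → Ordinal.{u}) (B : Set Ordinal.{u}) (i : Ordinal.{u}) :
    enum g B i =
      if Order.IsSuccLimit i then sSup (enum g B '' Set.Iio i)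
      else sInf {x | x ∈ B ∧ g i < x ∧ ∀ j < i, enum g B j < x} := by
  rw [enum, Set.image_eq_range]

theorem sSup_image_lt {κ : Cardinal.{u}} {α : Ordinal.{u}} (hcf : α.cof = κ) (h0 : 0 < α)
    {i : Ordinal.{u}} (hi : i < κ.ord) (f : Ordinal.{u} → Ordinal.{u}) (hf : ∀ j < i, f j < α) :
    sSup (f '' Set.Iio i) < α := by
  rcases (f '' Set.Iio i).eq_empty_or_nonempty with h | h
  · rw [h, csSup_empty]; exact h0
  · have hb : sSup (f '' Set.Iio i) ≤ Ordinal.bsup i (fun j _ => f j) := by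
      apply csSup_le h
      rintro x ⟨j, hj, rfl⟩
      exact Ordinal.le_bsup _ j hj
    refine hb.trans_lt (Ordinal.bsup_lt_ord ?_ fun j hj => hf j hj)
    rw [hcf]
    exact Cardinal.lt_ord.mp hi

section Spec
variable {κ : Cardinal.{u}} {α : Ordinal.{u}} {g : Ordinal.{u} → Ordinal.{u}} {B : Set Ordinal.{u}}

theorem enum_spec (hcf : α.cof = κ) (h0 : 0 < α)
    (hg : ∀ i < κ.ord, g i < α)
    (hB1 : ∀ x ∈ B, x < α) (hB2 : ∀ β < α, ∃ x ∈ B, β < x) :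
    ∀ i < κ.ord, (enum g B i < α) ∧ (∀ j < i, enum g B j < enum g B i) ∧
      (¬ Order.IsSuccLimit i → enum g B i ∈ B ∧ g i < enum g B i) := by
  intro i
  induction i using Ordinal.induction with
  | h i IH =>
  intro hi
  have hbddim : ∀ i' ≤ i, BddAbove (enum g B '' Set.Iio i') := by
    intro i' hi'
    apply bdd_of_lt (γ := α)
    rintro x ⟨k, hk, rfl⟩
    exact ((IH k (hk.trans_le hi') ((hk.trans_le hi').trans hi)).1).le
  by_cases hlim : Order.IsSuccLimit i
  · have hEq : enum g B i = sSup (enum g B '' Set.Iio i) := by rw [enum_def, if_pos hlim]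
    have h1 : enum g B i < α := by
      rw [hEq]
      exact sSup_image_lt hcf h0 hi _ (fun j hj => (IH j hj (hj.trans hi)).1)
    refine ⟨h1, ?_, fun h => absurd hlim h⟩
    intro j hj
    have hj1 : Order.succ j < i := hlim.succ_lt hj
    have h2 : enum g B j < enum g B (Order.succ j) :=
      (IH _ hj1 (hj1.trans hi)).2.1 j (Order.lt_succ j)
    refine h2.trans_le ?_
    rw [hEq]
    exact le_csSup (hbddim i le_rfl) (mem_image_of_mem _ hj1)
  · have hne : {x | x ∈ B ∧ g i < x ∧ ∀ j < i, enum g B j < x}.Nonempty := by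
      have hs : sSup (enum g B '' Set.Iio i) < α :=
        sSup_image_lt hcf h0 hi _ (fun j hj => (IH j hj (hj.trans hi)).1)
      obtain ⟨x, hxB, hx⟩ := hB2 (max (g i) (sSup (enum g B '' Set.Iio i))) (max_lt (hg i hi) hs)
      refine ⟨x, hxB, (le_max_left _ _).trans_lt hx, fun j hj => ?_⟩
      exact lt_of_le_of_lt
        ((le_csSup (hbddim i le_rfl) (mem_image_of_mem _ hj)).trans (le_max_right _ _)) hx
    have hEq : enum g B i = sInf {x | x ∈ B ∧ g i < x ∧ ∀ j < i, enum g B j < x} := by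
      rw [enum_def, if_neg hlim]
    have hmem : enum g B i ∈ {x | x ∈ B ∧ g i < x ∧ ∀ j < i, enum g B j < x} := by
      rw [hEq]; exact csInf_mem hne
    exact ⟨hB1 _ hmem.1, hmem.2.2, fun _ => ⟨hmem.1, hmem.2.1⟩⟩


theorem enum_strictMonoOn (hcf : α.cof = κ) (h0 : 0 < α)
    (hg : ∀ i < κ.ord, g i < α)
    (hB1 : ∀ x ∈ B, x < α) (hB2 : ∀ β < α, ∃ x ∈ B, β < x) :
    StrictMonoOn (enum g B) (Set.Iio κ.ord) := by
  intro i hi j hj hij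
  exact (enum_spec hcf h0 hg hB1 hB2 j hj).2.1 i hij

/-- The image of the enumeration is a club in `α`. -/
theorem enum_isClubIn (hcf : α.cof = κ) (h0 : 0 < α) (hκlim : Order.IsSuccLimit κ.ord)
    (hgm : ∀ i j : Ordinal, i < j → j < κ.ord → g i < g j)
    (hg : ∀ i < κ.ord, g i < α) (hg2 : ∀ β < α, ∃ i < κ.ord, β ≤ g i)
    (hB1 : ∀ x ∈ B, x < α) (hB2 : ∀ β < α, ∃ x ∈ B, β < x) :
    IsClubIn (enum g B '' Set.Iio κ.ord) α := by
  have spec := enum_spec hcf h0 hg hB1 hB2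
  have hmem : ∀ x ∈ enum g B '' Set.Iio κ.ord, x < α := by
    rintro x ⟨k, hk, rfl⟩; exact (spec k hk).1
  have hbdd : BddAbove (enum g B '' Set.Iio κ.ord) := bdd_of_lt (fun x hx => (hmem x hx).le)
  refine ⟨hmem, ?_, ?_⟩
  · -- closed
    intro s hs hne hssup
    set J : Set Ordinal := {j | j < κ.ord ∧ enum g B j ∈ s} with hJ
    have hsJ : s = enum g B '' J := by
      apply Set.Subset.antisymm
      · intro x hx
        obtain ⟨j, hj, rfl⟩ := hs hx
        exact ⟨j, ⟨hj, hx⟩, rfl⟩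
      · rintro x ⟨j, hj, rfl⟩; exact hj.2
    have hJbdd : BddAbove J := bdd_of_lt (fun j hj => hj.1.le)
    have hJne : J.Nonempty := by
      obtain ⟨x, hx⟩ := hne
      obtain ⟨j, hj, rfl⟩ := hs hx
      exact ⟨j, hj, hx⟩
    have hsbdd : BddAbove s := bdd_of_lt (fun x hx => (hmem x (hs hx)).le)
    set δ := sSup J with hδ
    have hδκ : δ ≤ κ.ord := csSup_le hJne (fun j hj => hj.1.le)
    by_cases hδJ : δ ∈ J
    · have h1 : sSup s = enum g B δ := by
        apply le_antisymm
        · apply csSup_le hne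
          intro x hx
          obtain ⟨j, hj, rfl⟩ := hs hx
          have hjJ : j ∈ J := ⟨hj, hx⟩
          rcases eq_or_lt_of_le (le_csSup hJbdd hjJ) with h | h
          · rw [h]
          · exact ((spec δ hδJ.1).2.1 j h).le
        · exact le_csSup hsbdd hδJ.2
      rw [h1]; exact ⟨δ, hδJ.1, rfl⟩
    · have hJlt : ∀ j ∈ J, j < δ := fun j hj => lt_of_le_of_ne (le_csSup hJbdd hj)
        (fun h => hδJ (h ▸ hj))
      have hJcof : ∀ γ < δ, ∃ j ∈ J, γ < j := by
        intro γ hγ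
        by_contra hcon
        push_neg at hcon
        exact absurd (csSup_le hJne hcon) (not_le_of_gt hγ)
      rcases lt_or_eq_of_le hδκ with hδκ' | hδκ'
      · have hδlim : Order.IsSuccLimit δ := by
          refine Ordinal.isSuccLimit_iff.mpr ⟨?_, Order.isSuccPrelimit_of_succ_lt ?_⟩
          · intro h0'
            obtain ⟨j, hj⟩ := hJne
            exact absurd (h0' ▸ hJlt j hj) (by simp : ¬ j < 0)
          · intro a ha
            obtain ⟨j, hj, haj⟩ := hJcof a ha
            exact lt_of_le_of_lt (Order.succ_le_of_lt haj) (hJlt j hj)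
        have hEq : enum g B δ = sSup (enum g B '' Set.Iio δ) := by
          rw [enum_def, if_pos hδlim]
        have h1 : sSup s = enum g B δ := by
          apply le_antisymm
          · apply csSup_le hne
            intro x hx
            obtain ⟨j, hj, rfl⟩ := hs hx
            exact ((spec δ hδκ').2.1 j (hJlt j ⟨hj, hx⟩)).le
          · rw [hEq]
            have hne2 : (enum g B '' Set.Iio δ).Nonempty := ⟨enum g B 0, 0, hδlim.pos, rfl⟩
            apply csSup_le hne2
            rintro x ⟨k, hk, rfl⟩
            obtain ⟨j, hj, hkj⟩ := hJcof k hk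
            exact ((spec j hj.1).2.1 k hkj).le.trans (le_csSup hsbdd hj.2)
        rw [h1]; exact ⟨δ, hδκ', rfl⟩
      · exfalso
        obtain ⟨i, hiκ, hile⟩ := hg2 (sSup s) hssup
        have hi1 : Order.succ i < κ.ord := hκlim.succ_lt hiκ
        obtain ⟨j, hj, hij⟩ := hJcof (Order.succ i) (lt_of_lt_of_le hi1 hδκ'.ge)
        have h2 : g i < enum g B j := by
          have h3 : g i < g (Order.succ i) := hgm i _ (Order.lt_succ i) hi1
          have h4 : g (Order.succ i) < enum g B (Order.succ i) :=
            ((spec _ hi1).2.2 (fun h => Order.not_isSuccLimit_succ i h)).2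
          exact h3.trans (h4.trans ((spec j hj.1).2.1 _ hij))
        exact absurd (le_csSup hsbdd hj.2) (not_le_of_gt (lt_of_le_of_lt hile h2))
  · -- unbounded
    intro β hβ
    obtain ⟨i, hiκ, hile⟩ := hg2 β hβ
    have hi1 : Order.succ i < κ.ord := hκlim.succ_lt hiκ
    refine ⟨enum g B (Order.succ i), ⟨_, hi1, rfl⟩, ?_⟩
    have h3 : g i < g (Order.succ i) := hgm i _ (Order.lt_succ i) hi1
    have h4 : g (Order.succ i) < enum g B (Order.succ i) :=
      ((spec _ hi1).2.2 (fun h => Order.not_isSuccLimit_succ i h)).2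
    exact lt_of_le_of_lt hile (h3.trans h4)

/-- If `B ⊆ Y` and `Y` is sup-closed below `Λ`, the enumeration stays in `Y`. -/
theorem enum_mem (hcf : α.cof = κ) (h0 : 0 < α)
    (hg : ∀ i < κ.ord, g i < α)
    (hB1 : ∀ x ∈ B, x < α) (hB2 : ∀ β < α, ∃ x ∈ B, β < x)
    {Λ : Ordinal.{u}} {Y : Set Ordinal.{u}} (hαΛ : α < Λ)
    (hY : ∀ s : Set Ordinal.{u}, s ⊆ Y → s.Nonempty → sSup s < Λ → sSup s ∈ Y)
    (hBY : B ⊆ Y) :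
    ∀ i < κ.ord, enum g B i ∈ Y := by
  intro i
  induction i using Ordinal.induction with
  | h i IH =>
  intro hi
  have spec := enum_spec hcf h0 hg hB1 hB2
  by_cases hlim : Order.IsSuccLimit i
  · have hEq : enum g B i = sSup (enum g B '' Set.Iio i) := by rw [enum_def, if_pos hlim]
    rw [hEq]
    refine hY _ ?_ ⟨enum g B 0, 0, hlim.pos, rfl⟩ ?_
    · rintro x ⟨k, hk, rfl⟩; exact IH k hk (hk.trans hi)
    · rw [← hEq]; exact (spec i hi).1.trans hαΛ
  · exact hBY ((spec i hi).2.2 hlim).1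

end Spec

theorem sSup_mono' {s t : Set Ordinal.{u}} (hst : s ⊆ t) (ht : BddAbove t) :
    sSup s ≤ sSup t := by
  rcases s.eq_empty_or_nonempty with h | h
  · rw [h, csSup_empty]; exact bot_le
  · exact csSup_le_csSup ht h hst

/-- `y < β` accumulation predicate. -/
def IsAcc (X : Set Ordinal.{u}) (β : Ordinal.{u}) : Prop :=
  ∀ y < β, ∃ x ∈ X, y < x ∧ x < β

/-- drop of the club `X` along the sequence `g` -/
def drop (g : Ordinal.{u} → Ordinal.{u}) (σ : Ordinal.{u}) (X : Set Ordinal.{u}) :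
    Set Ordinal.{u} :=
  {y | ∃ i < σ, (X ∩ Set.Iio (g i)).Nonempty ∧ y = sSup (X ∩ Set.Iio (g i))}

theorem drop_lt {g : Ordinal.{u} → Ordinal.{u}} {σ α : Ordinal.{u}} {X : Set Ordinal.{u}}
    (hg : ∀ i < σ, g i < α) : ∀ y ∈ drop g σ X, y < α := by
  rintro y ⟨i, hi, hne, rfl⟩
  exact lt_of_le_of_lt (csSup_le hne (fun x hx => hx.2.le)) (hg i hi)

theorem drop_unbounded {g : Ordinal.{u} → Ordinal.{u}} {σ α : Ordinal.{u}} {X : Set Ordinal.{u}}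
    (hαlim : Order.IsSuccLimit α) (hacc : IsAcc X α) (hg2 : ∀ β < α, ∃ i < σ, β ≤ g i) :
    ∀ β < α, ∃ y ∈ drop g σ X, β < y := by
  intro β hβ
  obtain ⟨x, hxX, hβx, hxα⟩ := hacc β hβ
  obtain ⟨i, hi, hxg⟩ := hg2 (Order.succ x) (hαlim.succ_lt hxα)
  have hxmem : x ∈ X ∩ Set.Iio (g i) := ⟨hxX, lt_of_lt_of_le (Order.lt_succ x) hxg⟩
  refine ⟨sSup (X ∩ Set.Iio (g i)), ⟨i, hi, ⟨x, hxmem⟩, rfl⟩, ?_⟩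
  exact lt_of_lt_of_le hβx (le_csSup (bdd_of_lt (fun z hz => hz.2.le)) hxmem)

theorem drop_subset {g : Ordinal.{u} → Ordinal.{u}} {σ Λ : Ordinal.{u}} {X : Set Ordinal.{u}}
    (hX : ∀ s : Set Ordinal.{u}, s ⊆ X → s.Nonempty → sSup s < Λ → sSup s ∈ X)
    (hg : ∀ i < σ, g i < Λ) : drop g σ X ⊆ X := by
  rintro y ⟨i, hi, hne, rfl⟩
  exact hX _ Set.inter_subset_left hne
    (lt_of_le_of_lt (csSup_le hne (fun x hx => hx.2.le)) (hg i hi))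

/-- the set of accumulation points below Λ -/
def accSet (X : Set Ordinal.{u}) (Λ : Ordinal.{u}) : Set Ordinal.{u} :=
  {β | β < Λ ∧ IsAcc X β}

theorem accSet_club {lam : Cardinal.{u}} (hreg : lam.IsRegular) (hgt : ℵ₀ < lam)
    {X : Set Ordinal.{u}} (hX : IsClubIn X lam.ord) : IsClubIn (accSet X lam.ord) lam.ord := by
  have hΛlim : Order.IsSuccLimit lam.ord := Cardinal.isSuccLimit_ord hreg.aleph0_le
  refine ⟨fun x hx => hx.1, ?_, ?_⟩
  · intro s hs hne hssup
    refine ⟨hssup, ?_⟩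
    intro y hy
    have : ∃ z ∈ s, y < z := by
      by_contra hcon
      push_neg at hcon
      exact absurd (csSup_le hne hcon) (not_le_of_gt hy)
    obtain ⟨z, hzs, hyz⟩ := this
    obtain ⟨x, hxX, hyx, hxz⟩ := (hs hzs).2 y hyz
    exact ⟨x, hxX, hyx, lt_of_lt_of_le hxz (le_csSup (bdd_of_lt
      (fun w hw => ((hs hw).1).le)) hzs)⟩
  · intro β hβ
    -- build an ω-chain through X
    have hstep : ∀ x < lam.ord, sInf {y | y ∈ X ∧ x < y} ∈ X ∧
        x < sInf {y | y ∈ X ∧ x < y} ∧ sInf {y | y ∈ X ∧ x < y} < lam.ord := by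
      intro x hx
      obtain ⟨y, hyX, hxy⟩ := hX.2.2 x hx
      have hmem := csInf_mem (⟨y, hyX, hxy⟩ : {y | y ∈ X ∧ x < y}.Nonempty)
      exact ⟨hmem.1, hmem.2, hX.1 _ hmem.1⟩
    let c : ℕ → Ordinal.{u} := fun n => Nat.rec β (fun _ x => sInf {y | y ∈ X ∧ x < y}) n
    have hc0 : c 0 = β := rfl
    have hcs : ∀ n, c (n + 1) = sInf {y | y ∈ X ∧ c n < y} := fun n => rfl
    have hclt : ∀ n, c n < lam.ord := by
      intro n
      induction n with
      | zero => exact hβ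
      | succ n ih => rw [hcs]; exact (hstep _ ih).2.2
    have hmono : ∀ n, c n < c (n + 1) := fun n => by
      rw [hcs]; exact (hstep _ (hclt n)).2.1
    have hcX : ∀ n, c (n + 1) ∈ X := fun n => by
      rw [hcs]; exact (hstep _ (hclt n)).1
    have hbddc : BddAbove (Set.range c) := bdd_of_lt (by rintro x ⟨n, rfl⟩; exact (hclt n).le)
    have hx0lt : (⨆ n, c n) < lam.ord := by
      refine Ordinal.iSup_lt_ord_lift ?_ hclt
      rw [Cardinal.mk_denumerable, Cardinal.lift_aleph0, hreg.cof_eq]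
      exact hgt
    have hle : ∀ n, c n ≤ ⨆ n, c n := fun n => le_csSup hbddc ⟨n, rfl⟩
    have hlt : ∀ y < (⨆ n, c n), ∃ n, y < c n := by
      intro y hy
      by_contra hcon
      push_neg at hcon
      have hrne : (Set.range c).Nonempty := ⟨c 0, 0, rfl⟩
      have : (⨆ n, c n) ≤ y := csSup_le hrne (by rintro x ⟨n, rfl⟩; exact hcon n)
      exact absurd this (not_le_of_gt hy)
    refine ⟨⨆ n, c n, ⟨hx0lt, ?_⟩, ?_⟩
    · intro y hy
      obtain ⟨n, hn⟩ := hlt y hy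
      refine ⟨c (n + 1), hcX n, hn.trans (hmono n), ?_⟩
      exact lt_of_lt_of_le (hmono (n+1)) (hle (n+2))
    · exact lt_of_lt_of_le (hmono 0) (hle 1)

theorem biInter_club {lam : Cardinal.{u}} (hreg : lam.IsRegular) (hgt : ℵ₀ < lam)
    {o : Ordinal.{u}} (ho : o.card < lam) {H : Ordinal.{u} → Set Ordinal.{u}}
    (hH : ∀ k < o, IsClubIn (H k) lam.ord) :
    IsClubIn (Set.Iio lam.ord ∩ ⋂ k, ⋂ _ : k < o, H k) lam.ord := by
  have hΛlim : Order.IsSuccLimit lam.ord := Cardinal.isSuccLimit_ord hreg.aleph0_le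
  refine ⟨fun x hx => hx.1, ?_, ?_⟩
  · intro s hs hne hssup
    refine ⟨hssup, ?_⟩
    apply Set.mem_iInter₂.mpr
    intro k hk
    exact (hH k hk).2.1 s (fun x hx => Set.mem_iInter₂.mp (hs hx).2 k hk) hne hssup
  · intro β hβ
    -- jump function
    have hstep : ∀ x : Ordinal.{u}, ∃ mm : Ordinal.{u}, x < lam.ord →
        x < mm ∧ mm < lam.ord ∧ ∀ k, ∀ hk : k < o, ∃ z ∈ H k, x < z ∧ z ≤ mm := by
      intro x
      refine ⟨max (Order.succ x) (Ordinal.bsup o fun k hk => sInf {y | y ∈ H k ∧ x < y}),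
        fun hx => ⟨lt_of_lt_of_le (Order.lt_succ x) (le_max_left _ _), ?_, ?_⟩⟩
      · apply max_lt (hΛlim.succ_lt hx)
        apply Ordinal.bsup_lt_ord (by rw [hreg.cof_eq]; exact ho)
        intro k hk
        obtain ⟨y, hyH, hxy⟩ := (hH k hk).2.2 x hx
        exact (hH k hk).1 _ (csInf_mem (⟨y, hyH, hxy⟩ : {y | y ∈ H k ∧ x < y}.Nonempty)).1
      · intro k hk
        obtain ⟨y, hyH, hxy⟩ := (hH k hk).2.2 x hx
        have hmem := csInf_mem (⟨y, hyH, hxy⟩ : {y | y ∈ H k ∧ x < y}.Nonempty)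
        exact ⟨_, hmem.1, hmem.2, (Ordinal.le_bsup _ k hk).trans (le_max_right _ _)⟩
    choose m hm using hstep
    let c : ℕ → Ordinal.{u} := fun n => Nat.rec (Order.succ β) (fun _ x => m x) n
    have hc0 : c 0 = Order.succ β := rfl
    have hcs : ∀ n, c (n + 1) = m (c n) := fun _ => rfl
    have hclt : ∀ n, c n < lam.ord := by
      intro n
      induction n with
      | zero => exact hΛlim.succ_lt hβ
      | succ n ih => rw [hcs]; exact (hm _ ih).2.1
    have hm1 : ∀ n, c n < m (c n) := fun n => (hm _ (hclt n)).1
    have hm3 : ∀ n, ∀ k, ∀ hk : k < o, ∃ z ∈ H k, c n < z ∧ z ≤ m (c n) :=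
      fun n => (hm _ (hclt n)).2.2
    have hmono : ∀ n, c n < c (n + 1) := fun n => by rw [hcs]; exact hm1 n
    have hbddc : BddAbove (Set.range c) := bdd_of_lt (by rintro x ⟨n, rfl⟩; exact (hclt n).le)
    have hx0lt : (⨆ n, c n) < lam.ord := by
      refine Ordinal.iSup_lt_ord_lift ?_ hclt
      rw [Cardinal.mk_denumerable, Cardinal.lift_aleph0, hreg.cof_eq]
      exact hgt
    have hle : ∀ n, c n ≤ ⨆ n, c n := fun n => le_csSup hbddc ⟨n, rfl⟩
    have hlt : ∀ y < (⨆ n, c n), ∃ n, y < c n := by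
      intro y hy
      by_contra hcon
      push_neg at hcon
      have hrne : (Set.range c).Nonempty := ⟨c 0, 0, rfl⟩
      have : (⨆ n, c n) ≤ y := csSup_le hrne (by rintro x ⟨n, rfl⟩; exact hcon n)
      exact absurd this (not_le_of_gt hy)
    refine ⟨⨆ n, c n, ⟨hx0lt, ?_⟩, lt_of_lt_of_le (Order.lt_succ β) (hle 0)⟩
    apply Set.mem_iInter₂.mpr
    intro k hk
    -- x0 is a limit of elements of H k
    have hcofk : ∀ y < (⨆ n, c n), ∃ z ∈ H k, y < z ∧ z < (⨆ n, c n) := by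
      intro y hy
      obtain ⟨n, hn⟩ := hlt y hy
      obtain ⟨z, hzH, hz1, hz2⟩ := hm3 n k hk
      refine ⟨z, hzH, hn.trans hz1, ?_⟩
      calc z ≤ c (n+1) := by rw [hcs]; exact hz2
        _ < c (n+2) := hmono (n+1)
        _ ≤ _ := hle (n+2)
    have hsub : {z | z ∈ H k ∧ z < (⨆ n, c n)} ⊆ H k := fun z hz => hz.1
    have hnez : {z | z ∈ H k ∧ z < (⨆ n, c n)}.Nonempty := by
      obtain ⟨z, hz⟩ := hcofk 0 (lt_of_le_of_lt zero_le (lt_of_lt_of_le (hmono 0) (hle 1)))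
      exact ⟨z, hz.1, hz.2.2⟩
    have hsupz : sSup {z | z ∈ H k ∧ z < (⨆ n, c n)} = ⨆ n, c n := by
      apply le_antisymm
      · exact csSup_le hnez (fun z hz => hz.2.le)
      · by_contra hcon
        push_neg at hcon
        obtain ⟨z, hzH, hz1, hz2⟩ := hcofk _ hcon
        have hzmem : z ∈ {z | z ∈ H k ∧ z < (⨆ n, c n)} := ⟨hzH, hz2⟩
        have hzle : z ≤ sSup {z | z ∈ H k ∧ z < (⨆ n, c n)} :=
          le_csSup (bdd_of_lt (fun w hw => hw.2.le)) hzmem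
        exact absurd hzle (not_le_of_gt hz1)
    have := (hH k hk).2.1 _ hsub hnez (by rw [hsupz]; exact hx0lt)
    rwa [hsupz] at this

theorem inter_club {lam : Cardinal.{u}} (hreg : lam.IsRegular) (hgt : ℵ₀ < lam)
    {A B : Set Ordinal.{u}} (hA : IsClubIn A lam.ord) (hB : IsClubIn B lam.ord) :
    IsClubIn (A ∩ B) lam.ord := by
  have h2 : ((2 : Ordinal.{u})).card < lam := by
    have : ((2 : Ordinal.{u})).card = 2 := by simp
    rw [this]
    exact lt_of_lt_of_le (by exact_mod_cast Cardinal.nat_lt_aleph0 2) hgt.le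
  have h := biInter_club hreg hgt h2 (H := fun k => if k = 0 then A else B)
    (fun k _ => by by_cases h : k = 0 <;> simp [h, hA, hB])
  have heq : Set.Iio lam.ord ∩ (⋂ k, ⋂ _ : k < (2 : Ordinal.{u}),
      (fun k => if k = 0 then A else B) k) = A ∩ B := by
    ext x
    simp only [Set.mem_inter_iff, Set.mem_iInter, Set.mem_Iio]
    constructor
    · rintro ⟨hx, h⟩
      have h0 := h 0 (by norm_num)
      have h1 := h 1 (by norm_num)
      rw [if_pos rfl] at h0
      rw [if_neg one_ne_zero] at h1
      exact ⟨h0, h1⟩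
    · rintro ⟨hxA, hxB⟩
      refine ⟨hA.1 x hxA, fun k hk => ?_⟩
      by_cases h : k = 0
      · rw [if_pos h]; exact hxA
      · rw [if_neg h]; exact hxB
  rwa [heq] at h

/-- The decreasing chain of clubs obtained from the `D` operation. -/
noncomputable def chain (Λ : Ordinal.{u}) (D : Set Ordinal.{u} → Set Ordinal.{u}) :
    Ordinal.{u} → Set Ordinal.{u}
  | j => Set.Iio Λ ∩ ⋂ k, ⋂ _ : k < j, (chain Λ D k ∩ D (chain Λ D k))
termination_by j => j
decreasing_by all_goals assumption

theorem chain_def (Λ : Ordinal.{u}) (D : Set Ordinal.{u} → Set Ordinal.{u}) (j : Ordinal.{u}) :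
    chain Λ D j = Set.Iio Λ ∩ ⋂ k, ⋂ _ : k < j, (chain Λ D k ∩ D (chain Λ D k)) := by
  rw [chain]

theorem chain_anti {Λ : Ordinal.{u}} {D : Set Ordinal.{u} → Set Ordinal.{u}}
    {j j' : Ordinal.{u}} (h : j ≤ j') : chain Λ D j' ⊆ chain Λ D j := by
  intro x hx
  rw [chain_def] at hx ⊢
  exact ⟨hx.1, Set.mem_iInter₂.mpr fun k hk => Set.mem_iInter₂.mp hx.2 k (hk.trans_le h)⟩

theorem chain_subset_self {Λ : Ordinal.{u}} {D : Set Ordinal.{u} → Set Ordinal.{u}}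
    {k j : Ordinal.{u}} (h : k < j) : chain Λ D j ⊆ chain Λ D k := by
  intro x hx
  rw [chain_def] at hx
  exact (Set.mem_iInter₂.mp hx.2 k h).1

theorem chain_subset_D {Λ : Ordinal.{u}} {D : Set Ordinal.{u} → Set Ordinal.{u}}
    {k j : Ordinal.{u}} (h : k < j) : chain Λ D j ⊆ D (chain Λ D k) := by
  intro x hx
  rw [chain_def] at hx
  exact (Set.mem_iInter₂.mp hx.2 k h).2

theorem chain_club {lam : Cardinal.{u}} (hreg : lam.IsRegular) (hgt : ℵ₀ < lam)
    {D : Set Ordinal.{u} → Set Ordinal.{u}} (hD : ∀ X, IsClubIn (D X) lam.ord) :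
    ∀ j : Ordinal.{u}, j.card < lam → IsClubIn (chain lam.ord D j) lam.ord := by
  intro j
  induction j using Ordinal.induction with
  | h j IH =>
  intro hj
  rw [chain_def]
  exact biInter_club hreg hgt hj (fun k hk =>
    inter_club hreg hgt (IH k hk (lt_of_le_of_lt (Ordinal.card_le_card hk.le) hj)) (hD _))


/-- If the sups of the successor-images agree, the smaller set is "the same" for sup purposes. -/
theorem transfer {A B : Set Ordinal.{u}} {γ : Ordinal.{u}} (hBA : B ⊆ A) (hA : ∀ x ∈ A, x < γ)
    (h : sSup (Order.succ '' A) = sSup (Order.succ '' B)) :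
    (A.Nonempty ↔ B.Nonempty) ∧ sSup A = sSup B := by
  have hbddA : BddAbove (Order.succ '' A) := bdd_of_lt (by
    rintro x ⟨a, ha, rfl⟩; exact Order.succ_le_of_lt (hA a ha))
  have hbddB : BddAbove (Order.succ '' B) := bdd_of_lt (by
    rintro x ⟨a, ha, rfl⟩; exact Order.succ_le_of_lt (hA a (hBA ha)))
  have hAB : ∀ a ∈ A, ∃ b ∈ B, a ≤ b := by
    intro a ha
    have h1 : Order.succ a ≤ sSup (Order.succ '' B) := by
      rw [← h]; exact le_csSup hbddA ⟨a, ha, rfl⟩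
    have h2 : a < sSup (Order.succ '' B) := lt_of_lt_of_le (Order.lt_succ a) h1
    have h3 : ∃ y ∈ Order.succ '' B, a < y := by
      by_contra hcon
      push_neg at hcon
      rcases (Order.succ '' B).eq_empty_or_nonempty with he | hne
      · rw [he, csSup_empty] at h2
        exact absurd h2 (by simp)
      · exact absurd (csSup_le hne hcon) (not_le_of_gt h2)
    obtain ⟨y, ⟨b, hb, rfl⟩, hay⟩ := h3
    exact ⟨b, hb, Order.lt_succ_iff.mp hay⟩
  constructor
  · constructor
    · rintro ⟨a, ha⟩
      obtain ⟨b, hb, -⟩ := hAB a ha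
      exact ⟨b, hb⟩
    · rintro ⟨b, hb⟩
      exact ⟨b, hBA hb⟩
  · apply le_antisymm
    · rcases A.eq_empty_or_nonempty with he | hne
      · rw [he, csSup_empty]; exact bot_le
      · apply csSup_le hne
        intro a ha
        obtain ⟨b, hb, hab⟩ := hAB a ha
        exact hab.trans (le_csSup (bdd_of_lt (fun x hx => (hA x (hBA hx)).le)) hb)
    · exact sSup_mono' hBA (bdd_of_lt (fun x hx => (hA x hx).le))


open scoped Classical in
/-- the base set used for the candidate guessing sequence -/
noncomputable def Bset (g : Ordinal.{u} → Ordinal.{u} → Ordinal.{u}) (σ : Ordinal.{u})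
    (X : Set Ordinal.{u}) (α : Ordinal.{u}) : Set Ordinal.{u} :=
  if IsAcc X α then drop (g α) σ X else Set.Iio α

theorem Bset_pos {g : Ordinal.{u} → Ordinal.{u} → Ordinal.{u}} {σ : Ordinal.{u}}
    {X : Set Ordinal.{u}} {α : Ordinal.{u}} (h : IsAcc X α) :
    Bset g σ X α = drop (g α) σ X := by
  unfold Bset; rw [if_pos h]

theorem Bset_neg {g : Ordinal.{u} → Ordinal.{u} → Ordinal.{u}} {σ : Ordinal.{u}}
    {X : Set Ordinal.{u}} {α : Ordinal.{u}} (h : ¬ IsAcc X α) :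
    Bset g σ X α = Set.Iio α := by
  unfold Bset; rw [if_neg h]

/-- the candidate guessing sequence attached to a club `X` -/
noncomputable def cand (g : Ordinal.{u} → Ordinal.{u} → Ordinal.{u}) (σ : Ordinal.{u})
    (X : Set Ordinal.{u}) (α : Ordinal.{u}) : Set Ordinal.{u} :=
  enum (g α) (Bset g σ X α) '' Set.Iio σ

theorem cand_def (g : Ordinal.{u} → Ordinal.{u} → Ordinal.{u}) (σ : Ordinal.{u})
    (X : Set Ordinal.{u}) (α : Ordinal.{u}) :
    cand g σ X α = enum (g α) (Bset g σ X α) '' Set.Iio σ := rfl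

end ClubGuess


open ClubGuess in
theorem clubGuessing_of_regular (κ lam : Cardinal) (hκ : κ.IsRegular)
    (hlam : lam.IsRegular) (hge : Order.succ (Order.succ κ) ≤ lam)
    (S : Set Ordinal) (hS : S ⊆ {δ : Ordinal | δ < lam.ord ∧ δ.cof = κ})
    (hstat : IsStatIn S lam.ord) :
    ∃ C : Ordinal → Set Ordinal,
      (∀ α ∈ S, IsClubIn (C α) α ∧
        Nonempty (Set.Iio κ.ord ≃o C α)) ∧
      ∀ E : Set Ordinal, IsClubIn E lam.ord → ∃ α ∈ S, C α ⊆ E := by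
  classical
  have hκω : ℵ₀ ≤ κ := hκ.aleph0_le
  have hκlam : κ < lam := lt_of_lt_of_le ((Order.lt_succ κ).trans (Order.lt_succ _)) hge
  have hgtℵ0 : ℵ₀ < lam := lt_of_le_of_lt hκω hκlam
  have hσlim : Order.IsSuccLimit κ.ord := Cardinal.isSuccLimit_ord hκω
  -- choose cofinal sequences of length κ.ord for every ordinal of cofinality κ
  have hgex : ∀ α : Ordinal, ∃ g : Ordinal → Ordinal, α.cof = κ →
      ((∀ i j : Ordinal, i < j → j < κ.ord → g i < g j) ∧ (∀ i < κ.ord, g i < α) ∧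
        (∀ β < α, ∃ i < κ.ord, β ≤ g i)) := by
    intro α
    by_cases h : α.cof = κ
    · obtain ⟨f, hf⟩ := Ordinal.exists_fundamental_sequence α
      have hco : κ.ord = α.cof.ord := by rw [h]
      refine ⟨fun i => if hi : i < α.cof.ord then f i hi else 0, fun _ => ⟨?_, ?_, ?_⟩⟩
      · intro i j hij hj
        rw [hco] at hj
        beta_reduce
        rw [dif_pos hj, dif_pos (hij.trans hj)]
        exact hf.2.1 _ _ hij
      · intro i hi
        rw [hco] at hi
        beta_reduce
        rw [dif_pos hi]
        have := Ordinal.lt_blsub (fun b hb => f b hb) i hi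
        rwa [hf.2.2] at this
      · intro β hβ
        have hb : β < Ordinal.blsub _ f := by rw [hf.2.2]; exact hβ
        obtain ⟨i, hi, hle⟩ := Ordinal.lt_blsub_iff.mp hb
        refine ⟨i, ?_, ?_⟩
        · rw [hco]; exact hi
        · beta_reduce; rw [dif_pos hi]; exact hle
    · exact ⟨fun _ => 0, fun hc => absurd hc h⟩
  choose gf hgf using hgex
  have hfacts : ∀ α ∈ S, α.cof = κ ∧ α < lam.ord ∧ Order.IsSuccLimit α := by
    intro α hα
    obtain ⟨h1, h2⟩ := hS hα
    refine ⟨h2, h1, ?_⟩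
    rw [← Ordinal.aleph0_le_cof, h2]
    exact hκω
  -- all candidates satisfy the structural requirements
  have hcandprop : ∀ X : Set Ordinal, ∀ α ∈ S,
      IsClubIn (cand gf κ.ord X α) α ∧ Nonempty (Set.Iio κ.ord ≃o (cand gf κ.ord X α)) := by
    intro X α hα
    obtain ⟨hcf, hαΛ, hαlim⟩ := hfacts α hα
    obtain ⟨hg1, hg2, hg3⟩ := hgf α hcf
    have hB12 : (∀ x ∈ Bset gf κ.ord X α, x < α) ∧ (∀ β < α, ∃ x ∈ Bset gf κ.ord X α, β < x) := by
      by_cases hacc : IsAcc X α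
      · rw [Bset_pos hacc]
        exact ⟨drop_lt hg2, drop_unbounded hαlim hacc hg3⟩
      · rw [Bset_neg hacc]
        exact ⟨fun x hx => hx, fun β hβ =>
          ⟨Order.succ β, Set.mem_Iio.mpr (hαlim.succ_lt hβ), Order.lt_succ β⟩⟩
    constructor
    · rw [cand_def]
      exact enum_isClubIn hcf hαlim.pos hσlim hg1 hg2 hg3 hB12.1 hB12.2
    · rw [cand_def]
      exact ⟨StrictMonoOn.orderIso _ _ (enum_strictMonoOn hcf hαlim.pos hg2 hB12.1 hB12.2)⟩
  by_contra hcon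
  push_neg at hcon
  have hD : ∀ X : Set Ordinal, ∃ E, IsClubIn E lam.ord ∧ ∀ α ∈ S, ¬cand gf κ.ord X α ⊆ E :=
    fun X => hcon _ (hcandprop X)
  choose D hD1 hD2 using hD
  set θ := (Order.succ κ).ord with hθdef
  set X := ClubGuess.chain lam.ord D with hXdef
  have hθcard : ∀ j ≤ θ, j.card < lam := by
    intro j hj
    calc j.card ≤ θ.card := Ordinal.card_le_card hj
      _ = Order.succ κ := Cardinal.card_ord _
      _ < lam := lt_of_lt_of_le (Order.lt_succ _) hge
  have hXclub : ∀ j ≤ θ, IsClubIn (X j) lam.ord :=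
    fun j hj => chain_club hlam hgtℵ0 hD1 j (hθcard j hj)
  obtain ⟨α, hαS, hαacc⟩ := hstat.2 _ (accSet_club hlam hgtℵ0 (hXclub θ le_rfl))
  obtain ⟨hcf, hαΛ, hαlim⟩ := hfacts α hαS
  obtain ⟨hg1, hg2, hg3⟩ := hgf α hcf
  have hαACC : IsAcc (X θ) α := hαacc.2
  have haccI : ∀ j ≤ θ, IsAcc (X j) α := by
    intro j hj y hy
    obtain ⟨x, hx1, hx2, hx3⟩ := hαACC y hy
    exact ⟨x, chain_anti hj hx1, hx2, hx3⟩
  have hθlim : Order.IsSuccLimit θ := Cardinal.isSuccLimit_ord (hκω.trans (Order.le_succ κ))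
  have hθcof : θ.cof = Order.succ κ := (Cardinal.isRegular_succ hκω).cof_eq
  -- stabilization of the drops along the chain
  have hW : ∀ i : Ordinal, ∃ j, j < θ ∧ ∀ j' < θ,
      sSup (Order.succ '' (X j ∩ Set.Iio (gf α i))) ≤
        sSup (Order.succ '' (X j' ∩ Set.Iio (gf α i))) := by
    intro i
    set T := (fun j => sSup (Order.succ '' (X j ∩ Set.Iio (gf α i)))) '' Set.Iio θ with hTdef
    have hTne : T.Nonempty := ⟨_, Set.mem_image_of_mem _ (Set.mem_Iio.mpr hθlim.pos)⟩
    obtain ⟨j, hj, hjeq⟩ := csInf_mem hTne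
    refine ⟨j, hj, fun j' hj' => ?_⟩
    calc sSup (Order.succ '' (X j ∩ Set.Iio (gf α i))) = sInf T := hjeq
      _ ≤ _ := csInf_le (OrderBot.bddBelow T) (Set.mem_image_of_mem _ (Set.mem_Iio.mpr hj'))
  choose jf hjf1 hjf2 using hW
  set i0 := Ordinal.bsup κ.ord (fun i _ => Order.succ (jf i)) with hi0def
  have hi0 : i0 < θ := by
    apply Ordinal.bsup_lt_ord ?_ (fun i hi => hθlim.succ_lt (hjf1 i))
    rw [hθcof, Cardinal.card_ord]
    exact Order.lt_succ κ
  have hi1 : Order.succ i0 < θ := hθlim.succ_lt hi0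
  have hanti : ∀ i : Ordinal, ∀ j j' : Ordinal, j ≤ j' →
      sSup (Order.succ '' (X j' ∩ Set.Iio (gf α i))) ≤
        sSup (Order.succ '' (X j ∩ Set.Iio (gf α i))) := by
    intro i j j' hjj
    apply sSup_mono'
    · exact Set.image_mono (Set.inter_subset_inter_left _ (chain_anti hjj))
    · apply bdd_of_lt (γ := Order.succ (gf α i))
      rintro x ⟨a, ha, rfl⟩
      exact Order.succ_le_succ ha.2.le
  have hstab : ∀ i : Ordinal, i < κ.ord →
      sSup (Order.succ '' (X i0 ∩ Set.Iio (gf α i))) =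
      sSup (Order.succ '' (X (Order.succ i0) ∩ Set.Iio (gf α i))) := by
    intro i hiκ
    have hji : jf i < i0 := lt_of_lt_of_le (Order.lt_succ _) (Ordinal.le_bsup _ i hiκ)
    apply le_antisymm
    · exact le_trans (hanti i (jf i) i0 hji.le) (hjf2 i _ hi1)
    · exact hanti i i0 (Order.succ i0) (Order.le_succ i0)
  -- drops at `i0` and `i0 + 1` coincide
  have hdropeq : drop (gf α) κ.ord (X i0) = drop (gf α) κ.ord (X (Order.succ i0)) := by
    ext y
    constructor
    · rintro ⟨i, hi, hne, rfl⟩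
      have ht := transfer (A := X i0 ∩ Set.Iio (gf α i)) (B := X (Order.succ i0) ∩ Set.Iio (gf α i))
        (Set.inter_subset_inter_left _ (chain_anti (Order.le_succ i0)))
        (fun x hx => hx.2) (hstab i hi)
      exact ⟨i, hi, ht.1.mp hne, ht.2⟩
    · rintro ⟨i, hi, hne, rfl⟩
      have ht := transfer (A := X i0 ∩ Set.Iio (gf α i)) (B := X (Order.succ i0) ∩ Set.Iio (gf α i))
        (Set.inter_subset_inter_left _ (chain_anti (Order.le_succ i0)))
        (fun x hx => hx.2) (hstab i hi)
      exact ⟨i, hi, ht.1.mpr hne, ht.2.symm⟩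
  -- the contradiction
  have hXs := hXclub (Order.succ i0) hi1.le
  have hBsub : drop (gf α) κ.ord (X (Order.succ i0)) ⊆ X (Order.succ i0) :=
    drop_subset hXs.2.1 (fun i hi => (hg2 i hi).trans hαΛ)
  have hB1 : ∀ x ∈ drop (gf α) κ.ord (X (Order.succ i0)), x < α := drop_lt hg2
  have hB2 : ∀ β < α, ∃ x ∈ drop (gf α) κ.ord (X (Order.succ i0)), β < x :=
    drop_unbounded hαlim (haccI _ hi1.le) hg3
  have hsubset : cand gf κ.ord (X i0) α ⊆ D (X i0) := by
    rw [cand_def, Bset_pos (haccI i0 hi0.le), hdropeq]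
    rintro x ⟨i, hi, rfl⟩
    have hmem : enum (gf α) (drop (gf α) κ.ord (X (Order.succ i0))) i ∈ X (Order.succ i0) :=
      enum_mem hcf hαlim.pos hg2 hB1 hB2 hαΛ hXs.2.1 hBsub i hi
    exact chain_subset_D (Order.lt_succ i0) hmem
  exact hD2 (X i0) α hαS hsubset
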